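/- For n ≥ 1 let ℓ(n) be the smallest integer that occurs as the least period of some length-n factor of the infinite Fibonacci word f. Then ℓ(n) = F_j whenever j ≥ 1 and L_j − 1 ≤ n ≤ L_{j+1} − 2, where L_j denotes the j-th Lucas number. -/

import Mathlib

/-- The Fibonacci morphism φ: 0 ↦ 01, 1 ↦ 0. -/
def fibPhi (w : List ℕ) : List ℕ := (w.map (fun c => if c = 0 then [0, 1] else [0])).flatten

/-- The infinite Fibonacci word f = 0100101001001⋯, the fixed point of φ starting with 0. -/
def fibWord (i : ℕ) : ℕ := ((fibPhi^[i + 2]) [0]).getD i 0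

/-- A finite word is a factor of the infinite Fibonacci word. -/
def IsFibFactor (x : List ℕ) : Prop :=
  ∃ i : ℕ, x = (List.range x.length).map (fun t => fibWord (i + t))

/-- p ≥ 1 is a period of the finite word x. -/
def HasPeriod (x : List ℕ) (p : ℕ) : Prop :=
  1 ≤ p ∧ ∀ i : ℕ, i + p < x.length → x.getD i 0 = x.getD (i + p) 0

/-- The Lucas numbers: L_0 = 2, L_1 = 1, L_{n+2} = L_n + L_{n+1}. -/
def lucas : ℕ → ℕ
  | 0 => 2
  | 1 => 1
  | n + 2 => lucas n + lucas (n + 1)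

namespace FibAux

def W (k : ℕ) : List ℕ := fibPhi^[k] [0]

lemma fibPhi_append (u v : List ℕ) : fibPhi (u ++ v) = fibPhi u ++ fibPhi v := by
  unfold fibPhi; rw [List.map_append, List.flatten_append]

lemma W_succ (k : ℕ) : W (k+1) = fibPhi (W k) := Function.iterate_succ_apply' _ _ _

lemma W_add_two (k : ℕ) : W (k+2) = W (k+1) ++ W k := by
  induction k with
  | zero => decide
  | succ k ih =>
      rw [W_succ (k+2), ih, fibPhi_append, ← W_succ, ← W_succ, ih]

lemma W_length : ∀ k, (W k).length = Nat.fib (k+2)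
  | 0 => rfl
  | 1 => rfl
  | (k+2) => by
      rw [W_add_two, List.length_append, W_length (k+1), W_length k,
        show k+2+2 = (k+2)+2 from rfl, Nat.fib_add_two (n := k+2),
        show k+1+2 = k+2+1 from by omega]
      omega

lemma W_prefix (k : ℕ) : W k <+: W (k+1) := by
  cases k with
  | zero => exact ⟨[1], rfl⟩
  | succ k => exact ⟨W k, (W_add_two k).symm⟩

lemma getD_of_prefix {u v : List ℕ} (h : u <+: v) {t : ℕ} (ht : t < u.length) :
    v.getD t 0 = u.getD t 0 := by
  obtain ⟨w, rfl⟩ := h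
  rw [List.getD_append _ _ _ _ ht]

lemma W_getD_mono {m m' t : ℕ} (h : m ≤ m') (ht : t < (W m).length) :
    (W m').getD t 0 = (W m).getD t 0 := by
  induction m' with
  | zero => rw [Nat.le_zero.mp h]
  | succ m' ih =>
      rcases Nat.lt_or_ge m (m'+1) with h' | h'
      · have h2 := ih (by omega)
        rw [← h2]
        have hlt : t < (W m').length := by
          rw [W_length]
          exact lt_of_lt_of_le (by rw [W_length] at ht; exact ht) (Nat.fib_mono (by omega))
        exact getD_of_prefix (W_prefix m') hlt
      · have : m = m' + 1 := by omega
        subst this; rfl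

lemma lt_fib_add_two (t : ℕ) : t < Nat.fib (t+2) := by
  induction t with
  | zero => decide
  | succ t ih =>
      have h1 : 1 ≤ Nat.fib (t+1) := Nat.fib_pos.mpr (by omega)
      have h2 : Nat.fib (t+1+2) = Nat.fib (t+1) + Nat.fib (t+2) := Nat.fib_add_two
      omega

lemma fibWord_eq_W {m t : ℕ} (ht : t < Nat.fib (m+2)) : fibWord t = (W m).getD t 0 := by
  have h0 : fibWord t = (W (t+2)).getD t 0 := rfl
  rcases Nat.le_total m (t+2) with h | h
  · rw [h0, W_getD_mono h (by rw [W_length]; exact ht)]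
  · rw [h0, ← W_getD_mono h (by
      rw [W_length]
      exact lt_of_lt_of_le (lt_fib_add_two t) (Nat.fib_mono (by omega)))]


lemma lucas_fib : ∀ j, lucas (j+1) = Nat.fib j + Nat.fib (j+2)
  | 0 => rfl
  | 1 => rfl
  | (j+2) => by
      show lucas (j+1) + lucas (j+2) = Nat.fib (j+2) + Nat.fib (j+4)
      rw [lucas_fib j, lucas_fib (j+1)]
      have h1 : Nat.fib (j+2) = Nat.fib j + Nat.fib (j+1) := Nat.fib_add_two
      have h2 : Nat.fib (j+3) = Nat.fib (j+1) + Nat.fib (j+2) := Nat.fib_add_two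
      have h3 : Nat.fib (j+4) = Nat.fib (j+2) + Nat.fib (j+3) := Nat.fib_add_two
      have h4 : Nat.fib (j+1+2) = Nat.fib (j+3) := rfl
      omega

lemma infix_fibPhi {u v : List ℕ} (h : u <:+: v) : fibPhi u <:+: fibPhi v := by
  obtain ⟨s, e, rfl⟩ := h
  exact ⟨fibPhi s, fibPhi e, by rw [← fibPhi_append, ← fibPhi_append]⟩

lemma infix_fibPhi_iter (m : ℕ) {u v : List ℕ} (h : u <:+: v) :
    fibPhi^[m] u <:+: fibPhi^[m] v := by
  induction m with
  | zero => exact h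
  | succ m ih =>
      rw [Function.iterate_succ_apply', Function.iterate_succ_apply']
      exact infix_fibPhi ih

lemma iter_append (m : ℕ) (u v : List ℕ) :
    fibPhi^[m] (u ++ v) = fibPhi^[m] u ++ fibPhi^[m] v := by
  induction m generalizing u v with
  | zero => rfl
  | succ m ih =>
      simp only [Function.iterate_succ_apply, fibPhi_append, ih]

lemma iter_one (m : ℕ) : fibPhi^[m+1] [1] = W m := by
  rw [Function.iterate_succ_apply]
  rfl

lemma getD_map_range (f : ℕ → ℕ) {n t : ℕ} (ht : t < n) :
    ((List.range n).map f).getD t 0 = f t := by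
  rw [List.getD_eq_getElem _ _ (by simpa using ht)]
  simp

lemma isFibFactor_of_infix {x : List ℕ} {m : ℕ} (h : x <:+: W m) : IsFibFactor x := by
  obtain ⟨s, e, hse⟩ := h
  refine ⟨s.length, ?_⟩
  have hlen : s.length + x.length + e.length = Nat.fib (m+2) := by
    rw [← W_length m, ← hse]; simp [Nat.add_assoc]
  apply List.ext_getElem (by simp)
  intro t ht1 ht2
  have htx : t < x.length := ht1
  have hW : s.length + t < Nat.fib (m+2) := by omega
  have h1 : fibWord (s.length + t) = (W m).getD (s.length + t) 0 := fibWord_eq_W hW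
  have h2 : (W m).getD (s.length + t) 0 = x.getD t 0 := by
    rw [← hse, List.append_assoc, List.getD_append_right _ _ _ _ (by omega),
      Nat.add_sub_cancel_left, List.getD_append _ _ _ _ htx]
  have h3 : x.getD t 0 = x[t] := List.getD_eq_getElem _ _ htx
  simp only [List.getElem_map, List.getElem_range]
  rw [← h3, ← h2, ← h1]

-- near-commutation
lemma NC : ∀ k, ∃ P : List ℕ, ∃ c d : ℕ,
    W (k+1) ++ W k = P ++ [c, d] ∧ W k ++ W (k+1) = P ++ [d, c]
  | 0 => ⟨[0], 1, 0, by decide, by decide⟩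
  | (k+1) => by
      obtain ⟨P, c, d, h1, h2⟩ := NC k
      refine ⟨W (k+1) ++ P, d, c, ?_, ?_⟩
      · rw [W_add_two k, List.append_assoc, h2, List.append_assoc]
      · rw [W_add_two k, ← List.append_assoc, List.append_assoc _ P, ← h1,
          List.append_assoc]

-- the long periodic factor
def R (a : ℕ) : List ℕ := W (a+1) ++ (W (a+1) ++ (W a ++ W (a+1)))

lemma R_infix (a : ℕ) : R a <:+: W (a+5) := by
  have h04 : ([0,0,1,0] : List ℕ) <:+: W 4 := ⟨[0,1], [1,0], by decide⟩
  have h := infix_fibPhi_iter (a+1) h04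
  have hW4 : fibPhi^[a+1] (W 4) = W (a+5) := by
    show fibPhi^[a+1] (fibPhi^[4] [0]) = _
    rw [← Function.iterate_add_apply]
    rfl
  have hR : fibPhi^[a+1] ([0,0,1,0] : List ℕ) = R a := by
    show fibPhi^[a+1] ([0] ++ ([0] ++ ([1] ++ [0]))) = _
    rw [iter_append, iter_append, iter_append, iter_one]
    rfl
  rw [hW4, hR] at h
  exact h

lemma R_length (a : ℕ) : (R a).length = 3 * Nat.fib (a+3) + Nat.fib (a+2) := by
  have hW1 : (W (a+1)).length = Nat.fib (a+3) := W_length (a+1)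
  have hW0 : (W a).length = Nat.fib (a+2) := W_length a
  simp only [R, List.length_append, hW1, hW0]
  omega

lemma R_period {a i : ℕ} (h : i + Nat.fib (a+3) < 3 * Nat.fib (a+3) + Nat.fib (a+2) - 2) :
    (R a).getD i 0 = (R a).getD (i + Nat.fib (a+3)) 0 := by
  obtain ⟨P, c, d, h1, h2⟩ := NC a
  have hW1 : (W (a+1)).length = Nat.fib (a+3) := W_length (a+1)
  have hW0 : (W a).length = Nat.fib (a+2) := W_length a
  have hfibpos : 0 < Nat.fib (a+2) := Nat.fib_pos.mpr (by omega)
  have hPlen : P.length + 2 = Nat.fib (a+3) + Nat.fib (a+2) := by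
    have hl := congrArg List.length h1
    simp only [List.length_append, hW1, hW0, List.length_cons, List.length_nil] at hl
    omega
  have hQlen : (W (a+1) ++ P).length = Nat.fib (a+3) + P.length := by
    simp [List.length_append, hW1]
  have hi : i < (W (a+1) ++ P).length := by rw [hQlen]; omega
  have key1 : R a = (W (a+1) ++ P) ++ ([c, d] ++ W (a+1)) := by
    show W (a+1) ++ (W (a+1) ++ (W a ++ W (a+1))) = _
    rw [← List.append_assoc (W (a+1)) (W a), h1]
    simp only [List.append_assoc]
  have key2 : R a = W (a+1) ++ ((W (a+1) ++ P) ++ [d, c]) := by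
    show W (a+1) ++ (W (a+1) ++ (W a ++ W (a+1))) = _
    rw [h2]
    simp only [List.append_assoc]
  have e1 : (R a).getD i 0 = (W (a+1) ++ P).getD i 0 := by
    rw [key1, List.getD_append _ _ _ _ hi]
  have e2 : (R a).getD (i + Nat.fib (a+3)) 0 = (W (a+1) ++ P).getD i 0 := by
    rw [key2, List.getD_append_right _ _ _ _ (by rw [hW1]; omega)]
    rw [hW1, show i + Nat.fib (a+3) - Nat.fib (a+3) = i from by omega]
    rw [List.getD_append _ _ _ _ hi]
  rw [e1, e2]

lemma getD_take {l : List ℕ} {n t : ℕ} (h : t < n) (h2 : t < l.length) :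
    (l.take n).getD t 0 = l.getD t 0 := by
  rw [List.getD_eq_getElem _ _ (by simp [List.length_take]; omega),
    List.getD_eq_getElem _ _ h2]
  simp [List.getElem_take]

lemma exists_good (a n : ℕ) (h2 : n + 2 ≤ lucas (a+4)) :
    ∃ x : List ℕ, IsFibFactor x ∧ x.length = n ∧ HasPeriod x (Nat.fib (a+3)) := by
  have hR : (R a).length = 3 * Nat.fib (a+3) + Nat.fib (a+2) := R_length a
  have hlucas : lucas (a+4) = Nat.fib (a+3) + Nat.fib (a+5) := lucas_fib (a+3)
  have hf5 : Nat.fib (a+5) = Nat.fib (a+3) + Nat.fib (a+4) := Nat.fib_add_two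
  have hf4 : Nat.fib (a+4) = Nat.fib (a+2) + Nat.fib (a+3) := Nat.fib_add_two
  have hn : n + 2 ≤ 3 * Nat.fib (a+3) + Nat.fib (a+2) := by omega
  refine ⟨(R a).take n, ?_, ?_, ?_⟩
  · exact isFibFactor_of_infix (List.IsInfix.trans ((List.take_prefix n (R a)).isInfix) (R_infix a))
  · rw [List.length_take]; omega
  · refine ⟨Nat.fib_pos.mpr (by omega), fun i hi => ?_⟩
    rw [List.length_take] at hi
    have hin : i + Nat.fib (a+3) < n := by omega
    rw [getD_take (by omega) (by omega), getD_take hin (by omega)]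
    exact R_period (by omega)

noncomputable section

def bphi : ℝ := (Real.sqrt 5 - 1) / 2
def al : ℝ := 1 - bphi

lemma s5 : Real.sqrt 5 ^ 2 = 5 := Real.sq_sqrt (by norm_num)
lemma s5nn : (0:ℝ) ≤ Real.sqrt 5 := Real.sqrt_nonneg 5
lemma s5gt : (2:ℝ) < Real.sqrt 5 := by nlinarith [s5, s5nn]
lemma s5lt : Real.sqrt 5 < 9/4 := by nlinarith [s5, s5nn]

lemma hb0 : 0 < bphi := by unfold bphi; nlinarith [s5gt]
lemma hb1 : bphi < 1 := by unfold bphi; nlinarith [s5lt]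
lemma hbhalf : 1/2 < bphi := by unfold bphi; nlinarith [s5gt]
lemma hbsq : bphi^2 = 1 - bphi := by unfold bphi; nlinarith [s5]
lemma hal : al = bphi^2 := by rw [hbsq]; rfl
lemma ha0 : 0 < al := by rw [hal]; exact pow_pos hb0 2
lemma ha1 : al < 1 := by unfold al; linarith [hb0]

lemma bpow_pos (k : ℕ) : 0 < bphi^k := pow_pos hb0 k
lemma bpow_lt_half {k : ℕ} (h : 2 ≤ k) : bphi^k < 1/2 := by
  calc bphi^k ≤ bphi^2 := pow_le_pow_of_le_one (le_of_lt hb0) (le_of_lt hb1) h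
  _ = 1 - bphi := hbsq
  _ < 1/2 := by linarith [hbhalf]
lemma bpow_le {k m : ℕ} (h : k ≤ m) : bphi^m ≤ bphi^k :=
  pow_le_pow_of_le_one (le_of_lt hb0) (le_of_lt hb1) h
lemma bpow_lt {k m : ℕ} (h : k < m) : bphi^m < bphi^k :=
  pow_lt_pow_right_of_lt_one₀ hb0 hb1 h

-- distance to nearest integer
def nrm (x : ℝ) : ℝ := |x - round x|

lemma nrm_nonneg (x : ℝ) : 0 ≤ nrm x := abs_nonneg _

lemma nrm_le (x : ℝ) (z : ℤ) : nrm x ≤ |x - z| := by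
  by_contra hcon
  push_neg at hcon
  have h1 : |x - round x| ≤ 1/2 := abs_sub_round x
  have h2 : |x - (z:ℝ)| < 1/2 := lt_of_lt_of_le hcon h1
  have h3 : |((round x - z : ℤ) : ℝ)| < 1 := by
    push_cast
    have := abs_sub_abs_le_abs_sub (x - z) (x - round x)
    have habs : |(x - z) - (x - round x)| ≤ |x - z| + |x - round x| := abs_sub _ _
    have : |(round x : ℝ) - z| = |(x - z) - (x - round x)| := by ring_nf
    rw [this]
    calc |(x - z) - (x - round x)| ≤ |x - z| + |x - round x| := habs
    _ < 1 := by linarith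
  have h4 : round x = z := by
    have h3' : ((|round x - z| : ℤ) : ℝ) < 1 := by rwa [Int.cast_abs]
    have h3'' : |round x - z| < 1 := by exact_mod_cast h3'
    have := abs_lt.mp h3''
    omega
  have : nrm x = |x - z| := by unfold nrm; rw [h4]
  linarith

lemma nrm_le_abs (x : ℝ) : nrm x ≤ |x| := by simpa using nrm_le x 0

lemma nrm_add_int (x : ℝ) (m : ℤ) : nrm (x + m) = nrm x := by
  unfold nrm
  rw [round_add_intCast]
  push_cast
  ring_nf

lemma nrm_neg (x : ℝ) : nrm (-x) = nrm x := by
  apply le_antisymm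
  · calc nrm (-x) ≤ |(-x) - (-(round x) : ℤ)| := nrm_le _ _
    _ = |x - round x| := by push_cast; rw [← abs_neg]; ring_nf
    _ = nrm x := rfl
  · calc nrm x ≤ |x - (-(round (-x)) : ℤ)| := nrm_le _ _
    _ = |(-x) - round (-x)| := by push_cast; rw [← abs_neg]; ring_nf
    _ = nrm (-x) := rfl

lemma nrm_triangle (x y : ℝ) : nrm (x + y) ≤ nrm x + nrm y := by
  calc nrm (x+y) ≤ |(x+y) - ((round x + round y : ℤ))| := nrm_le _ _
  _ = |(x - round x) + (y - round y)| := by push_cast; ring_nf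
  _ ≤ |x - round x| + |y - round y| := abs_add_le _ _
  _ = nrm x + nrm y := rfl

lemma nrm_add_ge (x y : ℝ) : nrm x - nrm y ≤ nrm (x + y) := by
  have h := nrm_triangle (x + y) (-y)
  rw [add_neg_cancel_right, nrm_neg] at h
  linarith

lemma nrm_le_fract (x : ℝ) : nrm x ≤ Int.fract x := by
  have h := nrm_le x ⌊x⌋
  rwa [Int.self_sub_floor, abs_of_nonneg (Int.fract_nonneg x)] at h

lemma nrm_le_one_sub_fract (x : ℝ) : nrm x ≤ 1 - Int.fract x := by
  have := nrm_le x (⌊x⌋ + 1)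
  have hfr : Int.fract x = x - ⌊x⌋ := (Int.self_sub_floor x).symm
  have he : |x - ((⌊x⌋ : ℤ) + 1 : ℤ)| = 1 - Int.fract x := by
    push_cast
    rw [abs_of_nonpos (by have := Int.fract_lt_one x; rw [hfr] at this; linarith)]
    rw [hfr]
    ring
  rwa [he] at this

lemma nrm_eq_of_small {x : ℝ} (h : |x| ≤ 1/2) : nrm x = |x| := by
  apply le_antisymm (nrm_le_abs x)
  rcases eq_or_ne (round x) 0 with h0 | h0
  · unfold nrm; rw [h0]; simp
  · have h1 : (1:ℝ) ≤ |(round x : ℝ)| := by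
      have : 1 ≤ |round x| := by
        rcases lt_or_gt_of_ne h0 with h | h
        · rw [abs_of_neg h]; omega
        · rw [abs_of_pos h]; omega
      exact_mod_cast this
    have : 1 - |x| ≤ |x - round x| := by
      have := abs_sub_abs_le_abs_sub (round x : ℝ) x
      rw [abs_sub_comm] at this
      linarith
    unfold nrm
    linarith

-- fract helpers
lemma fract_shift (X c : ℝ) : Int.fract (X + c) = Int.fract (Int.fract X + c) := by
  conv_lhs => rw [← Int.floor_add_fract X]
  rw [add_assoc, Int.fract_intCast_add]

lemma fract_eq_self_of {y : ℝ} (h0 : 0 ≤ y) (h1 : y < 1) : Int.fract y = y :=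
  Int.fract_eq_self.mpr ⟨h0, h1⟩

-- fib * beta
lemma fib_b : ∀ k : ℕ, (Nat.fib (k+1) : ℝ) * bphi = (Nat.fib k : ℝ) - (-bphi)^(k+1)
  | 0 => by simp
  | 1 => by
      have : ((Nat.fib 2 : ℕ) : ℝ) = 1 := by norm_num
      simp [this]
      nlinarith [hbsq]
  | (k+2) => by
      show (Nat.fib (k+3) : ℝ) * bphi = (Nat.fib (k+2) : ℝ) - (-bphi)^(k+3)
      have i1 := fib_b k
      have i2 := fib_b (k+1)
      have hf : (Nat.fib (k+3) : ℝ) = Nat.fib (k+1) + Nat.fib (k+2) := by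
        exact_mod_cast congrArg Nat.cast (Nat.fib_add_two (n := k+1))
      have hm : (-bphi)^(k+1) + (-bphi)^(k+2) = (-bphi)^(k+3) := by
        have h3 : (-bphi)^(k+3) = (-bphi)^(k+1) * bphi^2 := by ring
        rw [h3, hbsq]
        ring
      have hff : (Nat.fib (k+2) : ℝ) = Nat.fib k + Nat.fib (k+1) := by
        exact_mod_cast congrArg Nat.cast (Nat.fib_add_two (n := k))
      have i2' : (Nat.fib (k+2) : ℝ) * bphi = (Nat.fib (k+1) : ℝ) - (-bphi)^(k+2) := i2
      calc (Nat.fib (k+3) : ℝ) * bphi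
          = (Nat.fib (k+1) : ℝ) * bphi + (Nat.fib (k+2) : ℝ) * bphi := by rw [hf]; ring
      _ = ((Nat.fib k : ℝ) - (-bphi)^(k+1)) + ((Nat.fib (k+1) : ℝ) - (-bphi)^(k+2)) := by
            rw [i1, i2']
      _ = (Nat.fib (k+2) : ℝ) - (-bphi)^(k+3) := by rw [hff, ← hm]; ring

lemma fib_al (k : ℕ) : ∃ m : ℤ, (Nat.fib (k+1) : ℝ) * al = (m : ℝ) + (-bphi)^(k+1) := by
  refine ⟨(Nat.fib (k+1) : ℤ) - (Nat.fib k : ℤ), ?_⟩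
  unfold al
  push_cast
  linear_combination (-1 : ℝ) * fib_b k

lemma fib_al' : ∀ k : ℕ, 1 ≤ k → ∃ m : ℤ, (Nat.fib k : ℝ) * al = (m : ℝ) + (-bphi)^k := by
  intro k hk
  obtain ⟨k, rfl⟩ : ∃ k', k = k' + 1 := ⟨k - 1, by omega⟩
  exact fib_al k

lemma abs_neg_bpow (k : ℕ) : |(-bphi)^k| = bphi^k := by
  rw [abs_pow, abs_neg, abs_of_pos hb0]

lemma nrm_fib {k : ℕ} (hk : 2 ≤ k) : nrm ((Nat.fib k : ℝ) * al) = bphi^k := by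
  obtain ⟨m, hm⟩ := fib_al' k (by omega)
  rw [hm, add_comm, nrm_add_int, nrm_eq_of_small (by rw [abs_neg_bpow]; exact le_of_lt (bpow_lt_half hk)), abs_neg_bpow]

-- best approximation
lemma BA : ∀ k : ℕ, 1 ≤ k → ∀ u : ℕ, 1 ≤ u → u < Nat.fib (k+1) → bphi^k ≤ nrm ((u:ℝ) * al) := by
  intro k
  induction k using Nat.strong_induction_on with
  | _ k ih =>
    intro hk u hu1 hu2
    match k, hk with
    | 1, _ =>
        have : Nat.fib (1+1) = 1 := rfl
        omega
    | 2, _ =>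
        have hf3 : Nat.fib (2+1) = 2 := rfl
        have hu : u = 1 := by omega
        subst hu
        have : ((1:ℕ):ℝ) * al = al := by norm_num
        rw [this, hal, nrm_eq_of_small (by rw [abs_of_pos (pow_pos hb0 2)]; exact le_of_lt (bpow_lt_half (le_refl 2))), abs_of_pos (pow_pos hb0 2)]
    | (k+3), _ =>
        rcases lt_trichotomy u (Nat.fib (k+3)) with h | h | h
        · have := ih (k+2) (by omega) (by omega) u hu1 (by exact h)
          calc bphi^(k+3) ≤ bphi^(k+2) := bpow_le (by omega)
          _ ≤ _ := this
        · subst h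
          rw [nrm_fib (by omega)]
        · obtain ⟨r, rfl⟩ : ∃ r, u = Nat.fib (k+3) + r := ⟨u - Nat.fib (k+3), by omega⟩
          have hr1 : 1 ≤ r := by omega
          have hr2 : r < Nat.fib (k+2) := by
            have h4 : Nat.fib (k+4) = Nat.fib (k+2) + Nat.fib (k+3) := Nat.fib_add_two
            have h4' : Nat.fib (k+3+1) = Nat.fib (k+4) := rfl
            omega
          have hIH : bphi^(k+1) ≤ nrm ((r:ℝ) * al) := ih (k+1) (by omega) (by omega) r hr1 hr2
          have hsplit : ((Nat.fib (k+3) + r : ℕ) : ℝ) * al = (r:ℝ) * al + (Nat.fib (k+3) : ℝ) * al := by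
            push_cast; ring
          rw [hsplit]
          have h1 : nrm ((r:ℝ)*al) - nrm ((Nat.fib (k+3):ℝ)*al) ≤ nrm ((r:ℝ)*al + (Nat.fib (k+3):ℝ)*al) := nrm_add_ge _ _
          rw [nrm_fib (by omega)] at h1
          have hcalc : bphi^(k+1) - bphi^(k+3) = bphi^(k+2) := by
            have : bphi^(k+3) = bphi^(k+1) * bphi^2 := by ring
            rw [this, hbsq]; ring
          have : bphi^(k+3) ≤ bphi^(k+2) := bpow_le (by omega)
          linarith

lemma fract_sub_small (X : ℝ) (m : ℤ) (ε : ℝ) (hε : 0 ≤ ε) (h0 : ε ≤ Int.fract X) :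
    Int.fract (X + ((m:ℝ) - ε)) = Int.fract X - ε := by
  have he : X + ((m:ℝ) - ε) = (X - ε) + m := by ring
  rw [he, Int.fract_add_intCast, sub_eq_add_neg X ε, fract_shift X (-ε)]
  have h1 : Int.fract X - ε < 1 := by linarith [Int.fract_lt_one X]
  have h2 : 0 ≤ Int.fract X - ε := by linarith
  rw [show Int.fract X + -ε = Int.fract X - ε from by ring, fract_eq_self_of h2 h1]

lemma odd_neg_bpow {k : ℕ} (h : Odd k) : (-bphi)^k = -bphi^k := Odd.neg_pow h bphi

-- the hitting lemma
lemma GH : ∀ M : ℕ, ∀ c : ℝ, ∃ t : ℕ, t < Nat.fib (M+2) ∧ Int.fract ((t:ℝ) * al - c) < bphi^M := by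
  intro M
  induction M using Nat.strong_induction_on with
  | _ M ih =>
    intro c
    match M with
    | 0 =>
        refine ⟨0, by decide, ?_⟩
        simpa using Int.fract_lt_one (0 * al - c)
    | (M+1) =>
      rcases Nat.even_or_odd (M+1) with heven | hodd
      · -- even case : M+1 = K+2 with K even
        obtain ⟨K, hK⟩ : ∃ K, M + 1 = K + 2 := by
          refine ⟨M - 1, ?_⟩
          rcases heven with ⟨c', hc'⟩
          omega
        rw [hK]
        obtain ⟨t0, ht0, hz⟩ := ih K (by omega) c
        set z := Int.fract ((t0:ℝ) * al - c) with hzdef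
        have hz0 : 0 ≤ z := Int.fract_nonneg _
        by_cases hc1 : z < bphi^(K+2)
        · exact ⟨t0, lt_of_lt_of_le ht0 (Nat.fib_mono (by omega)), hc1⟩
        push_neg at hc1
        by_cases hc2 : bphi^(K+1) ≤ z
        · -- use t0 + fib (K+1)
          refine ⟨t0 + Nat.fib (K+1), ?_, ?_⟩
          · have hstep : Nat.fib (K+3) = Nat.fib (K+1) + Nat.fib (K+2) := Nat.fib_add_two (n := K+1)
            have hmono : Nat.fib (K+3) ≤ Nat.fib (K+4) := Nat.fib_mono (by omega)
            have he : Nat.fib (K+2+2) = Nat.fib (K+4) := rfl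
            omega
          · have hoddK1 : Odd (K+1) := by
              rw [Nat.odd_iff]; rw [Nat.even_iff] at heven; omega
            obtain ⟨m, hm⟩ := fib_al' (K+1) (by omega)
            rw [odd_neg_bpow hoddK1] at hm
            have hsplit : ((t0 + Nat.fib (K+1) : ℕ) : ℝ) * al - c
                = ((t0:ℝ) * al - c) + ((m:ℝ) - bphi^(K+1)) := by
              push_cast
              linear_combination hm
            rw [hsplit, fract_sub_small _ m _ (le_of_lt (bpow_pos _)) (by rw [← hzdef]; exact hc2), ← hzdef]
            have hend : bphi^K - bphi^(K+1) = bphi^(K+2) := by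
              have h3 : bphi^(K+2) = bphi^K * bphi^2 := by ring
              rw [h3, hbsq]; ring
            linarith
        · -- bphi^(K+2) ≤ z < bphi^(K+1), use t0 + fib (K+3)
          push_neg at hc2
          refine ⟨t0 + Nat.fib (K+3), ?_, ?_⟩
          · have hstep : Nat.fib (K+4) = Nat.fib (K+2) + Nat.fib (K+3) := Nat.fib_add_two (n := K+2)
            have he : Nat.fib (K+2+2) = Nat.fib (K+4) := rfl
            omega
          · have hoddK3 : Odd (K+3) := by
              rw [Nat.odd_iff]; rw [Nat.even_iff] at heven; omega
            obtain ⟨m, hm⟩ := fib_al' (K+3) (by omega)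
            rw [odd_neg_bpow hoddK3] at hm
            have hsplit : ((t0 + Nat.fib (K+3) : ℕ) : ℝ) * al - c
                = ((t0:ℝ) * al - c) + ((m:ℝ) - bphi^(K+3)) := by
              push_cast
              linear_combination hm
            have hge : bphi^(K+3) ≤ z := le_trans (bpow_le (by omega)) hc1
            rw [hsplit, fract_sub_small _ m _ (le_of_lt (bpow_pos _)) (by rw [← hzdef]; exact hge), ← hzdef]
            have hend : bphi^(K+1) - bphi^(K+3) = bphi^(K+2) := by
              have h3 : bphi^(K+3) = bphi^(K+1) * bphi^2 := by ring
              have h4 : bphi^(K+2) = bphi^(K+1) * bphi := by ring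
              rw [h3, h4, hbsq]; ring
            linarith
      · -- odd case : use ih M and shift by fib (M+1)
        obtain ⟨t0, ht0, hz⟩ := ih M (by omega) c
        set z := Int.fract ((t0:ℝ) * al - c) with hzdef
        have hz0 : 0 ≤ z := Int.fract_nonneg _
        by_cases hc1 : z < bphi^(M+1)
        · exact ⟨t0, lt_of_lt_of_le ht0 (Nat.fib_mono (by omega)), hc1⟩
        push_neg at hc1
        refine ⟨t0 + Nat.fib (M+1), ?_, ?_⟩
        · have hstep : Nat.fib (M+3) = Nat.fib (M+1) + Nat.fib (M+2) := Nat.fib_add_two (n := M+1)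
          have he : Nat.fib (M+1+2) = Nat.fib (M+3) := rfl
          omega
        · obtain ⟨m, hm⟩ := fib_al' (M+1) (by omega)
          rw [odd_neg_bpow hodd] at hm
          have hsplit : ((t0 + Nat.fib (M+1) : ℕ) : ℝ) * al - c
              = ((t0:ℝ) * al - c) + ((m:ℝ) - bphi^(M+1)) := by
            push_cast
            linear_combination hm
          rw [hsplit, fract_sub_small _ m _ (le_of_lt (bpow_pos _)) (by rw [← hzdef]; exact hc1), ← hzdef]
          have hend : bphi^M - bphi^(M+1) = bphi^(M+2) := by
            have h3 : bphi^(M+2) = bphi^M * bphi^2 := by ring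
            rw [h3, hbsq]; ring
          have : bphi^(M+2) ≤ bphi^(M+1) := bpow_le (by omega)
          linarith



def ind (t : ℕ) : ℕ := if bphi ≤ Int.fract (((t:ℝ)+1) * al) then 1 else 0

lemma fract_help {x : ℝ} {m : ℤ} (h1 : (m:ℝ) ≤ x) (h2 : x < (m:ℝ)+1) :
    Int.fract x = x - m := by
  have : ⌊x⌋ = m := Int.floor_eq_iff.mpr ⟨h1, by exact_mod_cast h2⟩
  rw [Int.fract, this]

lemma ind_shift (x δ : ℝ) (m : ℤ) (h1 : |δ| < nrm x) (h2 : |δ| < nrm (x + al)) :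
    (bphi ≤ Int.fract (x + ((m:ℝ) + δ))) ↔ (bphi ≤ Int.fract x) := by
  set y := Int.fract x with hy
  have habs := abs_lt.mp h1
  have hny1 : nrm x ≤ y := nrm_le_fract x
  have hny2 : nrm x ≤ 1 - y := nrm_le_one_sub_fract x
  have hfx : Int.fract (x + ((m:ℝ) + δ)) = y + δ := by
    have he : x + ((m:ℝ) + δ) = (x + δ) + m := by ring
    rw [he, Int.fract_add_intCast, fract_shift x δ, ← hy,
      fract_eq_self_of (by linarith [habs.1]) (by linarith [habs.2])]
  have hcmp : |δ| < |y - bphi| := by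
    have e1 : nrm (x + al) = nrm (y + al) := by
      have : x + al = (y + al) + (⌊x⌋ : ℤ) := by
        rw [hy, Int.fract]; push_cast; ring
      rw [this, nrm_add_int]
    have e2 : nrm (y + al) ≤ |y - bphi| := by
      have h3 := nrm_le (y + al) 1
      have he : |y + al - ((1:ℤ):ℝ)| = |y - bphi| := by
        unfold al; push_cast; ring_nf
      rwa [he] at h3
    linarith
  rw [hfx]
  rcases le_or_gt bphi y with hc | hc
  · have h3 : |δ| < y - bphi := by
      rwa [abs_of_nonneg (show (0:ℝ) ≤ y - bphi by linarith)] at hcmp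
    have h4 := abs_lt.mp h3
    constructor
    · intro _; exact hc
    · intro _; linarith [h4.1]
  · have h3 : |δ| < bphi - y := by
      rw [abs_sub_comm] at hcmp
      rwa [abs_of_nonneg (show (0:ℝ) ≤ bphi - y by linarith)] at hcmp
    have h4 := abs_lt.mp h3
    constructor
    · intro hcon; linarith [h4.2]
    · intro hcon; linarith

lemma fib_lt_fib {a b : ℕ} (h2 : 2 ≤ a) (h : a < b) : Nat.fib a < Nat.fib b := by
  calc Nat.fib a < Nat.fib (a+1) := by
        have h1 : 0 < Nat.fib (a-1) := Nat.fib_pos.mpr (by omega)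
        have h3 : Nat.fib (a-1+2) = Nat.fib (a-1) + Nat.fib (a-1+1) := Nat.fib_add_two
        have e1 : a-1+2 = a+1 := by omega
        have e2 : a-1+1 = a := by omega
        rw [e1, e2] at h3
        omega
  _ ≤ Nat.fib b := Nat.fib_mono (by omega)

lemma E : ∀ k, ∀ t, t < Nat.fib (k+2) → (W k).getD t 0 = ind t := by
  intro k
  induction k using Nat.strong_induction_on with
  | _ k ih =>
    match k with
    | 0 =>
      intro t ht
      have hf : Nat.fib (0+2) = 1 := rfl
      have ht0 : t = 0 := by omega
      subst ht0
      show (W 0).getD 0 0 = ind 0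
      have hL : (W 0).getD 0 0 = 0 := by decide
      rw [hL, ind, if_neg]
      push_neg
      rw [show (((0:ℕ):ℝ)+1) * al = al by norm_num,
        fract_help (m := 0) (by push_cast; linarith [ha0]) (by push_cast; linarith [ha1])]
      push_cast
      unfold al
      linarith [hbhalf]
    | 1 =>
      intro t ht
      have hf : Nat.fib (1+2) = 2 := rfl
      interval_cases t
      · show (W 1).getD 0 0 = ind 0
        have hL : (W 1).getD 0 0 = 0 := by decide
        rw [hL, ind, if_neg]
        push_neg
        rw [show (((0:ℕ):ℝ)+1) * al = al by norm_num,
          fract_help (m := 0) (by push_cast; linarith [ha0]) (by push_cast; linarith [ha1])]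
        push_cast
        unfold al
        linarith [hbhalf]
      · show (W 1).getD 1 0 = ind 1
        have hL : (W 1).getD 1 0 = 1 := by decide
        rw [hL, ind, if_pos]
        rw [show (((1:ℕ):ℝ)+1) * al = 2*al by norm_num,
          fract_help (m := 0) (by push_cast; unfold al; linarith [hb1]) (by push_cast; unfold al; linarith [hbhalf])]
        push_cast
        unfold al bphi
        nlinarith [s5, s5nn]
    | 2 =>
      intro t ht
      have hf : Nat.fib (2+2) = 3 := rfl
      interval_cases t
      · show (W 2).getD 0 0 = ind 0
        have hL : (W 2).getD 0 0 = 0 := by decide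
        rw [hL, ind, if_neg]
        push_neg
        rw [show (((0:ℕ):ℝ)+1) * al = al by norm_num,
          fract_help (m := 0) (by push_cast; linarith [ha0]) (by push_cast; linarith [ha1])]
        push_cast; unfold al; linarith [hbhalf]
      · show (W 2).getD 1 0 = ind 1
        have hL : (W 2).getD 1 0 = 1 := by decide
        rw [hL, ind, if_pos]
        rw [show (((1:ℕ):ℝ)+1) * al = 2*al by norm_num,
          fract_help (m := 0) (by push_cast; unfold al; linarith [hb1]) (by push_cast; unfold al; linarith [hbhalf])]
        push_cast; unfold al bphi; nlinarith [s5, s5nn]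
      · show (W 2).getD 2 0 = ind 2
        have hL : (W 2).getD 2 0 = 0 := by decide
        rw [hL, ind, if_neg]
        push_neg
        rw [show (((2:ℕ):ℝ)+1) * al = 3*al by norm_num,
          fract_help (m := 1) (by push_cast; unfold al bphi; nlinarith [s5, s5nn]) (by push_cast; unfold al bphi; nlinarith [s5, s5nn])]
        push_cast; unfold al; linarith [hbhalf]
    | 3 =>
      intro t ht
      have hf : Nat.fib (3+2) = 5 := rfl
      interval_cases t
      · show (W 3).getD 0 0 = ind 0
        have hL : (W 3).getD 0 0 = 0 := by decide
        rw [hL, ind, if_neg]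
        push_neg
        rw [show (((0:ℕ):ℝ)+1) * al = al by norm_num,
          fract_help (m := 0) (by push_cast; linarith [ha0]) (by push_cast; linarith [ha1])]
        push_cast; unfold al; linarith [hbhalf]
      · show (W 3).getD 1 0 = ind 1
        have hL : (W 3).getD 1 0 = 1 := by decide
        rw [hL, ind, if_pos]
        rw [show (((1:ℕ):ℝ)+1) * al = 2*al by norm_num,
          fract_help (m := 0) (by push_cast; unfold al; linarith [hb1]) (by push_cast; unfold al; linarith [hbhalf])]
        push_cast; unfold al bphi; nlinarith [s5, s5nn]
      · show (W 3).getD 2 0 = ind 2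
        have hL : (W 3).getD 2 0 = 0 := by decide
        rw [hL, ind, if_neg]
        push_neg
        rw [show (((2:ℕ):ℝ)+1) * al = 3*al by norm_num,
          fract_help (m := 1) (by push_cast; unfold al bphi; nlinarith [s5, s5nn]) (by push_cast; unfold al bphi; nlinarith [s5, s5nn])]
        push_cast; unfold al; linarith [hbhalf]
      · show (W 3).getD 3 0 = ind 3
        have hL : (W 3).getD 3 0 = 0 := by decide
        rw [hL, ind, if_neg]
        push_neg
        rw [show (((3:ℕ):ℝ)+1) * al = 4*al by norm_num,
          fract_help (m := 1) (by push_cast; unfold al bphi; nlinarith [s5, s5nn]) (by push_cast; unfold al bphi; nlinarith [s5, s5nn])]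
        push_cast; unfold al bphi; nlinarith [s5, s5nn]
      · show (W 3).getD 4 0 = ind 4
        have hL : (W 3).getD 4 0 = 1 := by decide
        rw [hL, ind, if_pos]
        rw [show (((4:ℕ):ℝ)+1) * al = 5*al by norm_num,
          fract_help (m := 1) (by push_cast; unfold al bphi; nlinarith [s5, s5nn]) (by push_cast; unfold al bphi; nlinarith [s5, s5nn])]
        push_cast; unfold al bphi; nlinarith [s5, s5nn]
    | (k+4) =>
      intro t ht
      have hsplit : W (k+4) = W (k+3) ++ W (k+2) := W_add_two (k+2)
      have hlen3 : (W (k+3)).length = Nat.fib (k+5) := W_length (k+3)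
      have hlen2 : (W (k+2)).length = Nat.fib (k+4) := W_length (k+2)
      rcases lt_or_ge t (Nat.fib (k+5)) with hcase | hcase
      · rw [hsplit, List.getD_append _ _ _ _ (by rw [hlen3]; exact hcase)]
        exact ih (k+3) (by omega) t hcase
      · obtain ⟨r, rfl⟩ : ∃ r, t = Nat.fib (k+5) + r := ⟨t - Nat.fib (k+5), by omega⟩
        have hfib6 : Nat.fib (k+6) = Nat.fib (k+4) + Nat.fib (k+5) := Nat.fib_add_two (n := k+4)
        have hfib6' : Nat.fib (k+4+2) = Nat.fib (k+6) := rfl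
        have hr : r < Nat.fib (k+4) := by omega
        rw [hsplit, List.getD_append_right _ _ _ _ (by rw [hlen3]; omega)]
        rw [hlen3, show Nat.fib (k+5) + r - Nat.fib (k+5) = r from by omega]
        rw [ih (k+2) (by omega) r hr]
        -- now show ind r = ind (fib (k+5) + r)
        obtain ⟨m, hm⟩ := fib_al' (k+5) (by omega)
        have hx : ((((Nat.fib (k+5) + r : ℕ)):ℝ)+1) * al
            = (((r:ℝ)+1) * al) + ((m:ℝ) + (-bphi)^(k+5)) := by
          push_cast
          linear_combination hm
        have hb5 : |(-bphi)^(k+5)| = bphi^(k+5) := abs_neg_bpow (k+5)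
        have hfib5 : Nat.fib (k+5) = Nat.fib (k+3) + Nat.fib (k+4) := Nat.fib_add_two (n := k+3)
        have hfib3pos : 2 ≤ Nat.fib (k+3) := by
          have : Nat.fib 3 ≤ Nat.fib (k+3) := Nat.fib_mono (by omega)
          have h3 : Nat.fib 3 = 2 := rfl
          omega
        have e45 : Nat.fib (k+4+1) = Nat.fib (k+5) := rfl
        have hnrm1 : bphi^(k+4) ≤ nrm ((((r:ℝ)+1)) * al) := by
          have hcast : (((r:ℝ)+1)) * al = (((r+1 : ℕ)):ℝ) * al := by push_cast; ring
          rw [hcast]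
          exact BA (k+4) (by omega) (r+1) (by omega) (by omega)
        have hnrm2 : bphi^(k+4) ≤ nrm ((((r:ℝ)+1)) * al + al) := by
          have hcast : (((r:ℝ)+1)) * al + al = (((r+2 : ℕ)):ℝ) * al := by push_cast; ring
          rw [hcast]
          exact BA (k+4) (by omega) (r+2) (by omega) (by omega)
        have hlt : |(-bphi)^(k+5)| < bphi^(k+4) := by
          rw [hb5]; exact bpow_lt (by omega)
        unfold ind
        rw [hx]
        rw [if_congr (ind_shift _ _ m (lt_of_lt_of_le hlt hnrm1) (lt_of_lt_of_le hlt hnrm2)) rfl rfl]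

lemma fibWord_ind (u : ℕ) : fibWord u = ind u := by
  have h0 : fibWord u = (W (u+2)).getD u 0 := rfl
  rw [h0]
  exact E (u+2) u (lt_of_lt_of_le (lt_fib_add_two u) (Nat.fib_mono (by omega)))


def Flo (a : ℕ) : ℤ := ⌊(a:ℝ) * al⌋

lemma floor_step (x : ℝ) : ⌊x + al⌋ = ⌊x⌋ + (if bphi ≤ Int.fract x then 1 else 0) := by
  conv_lhs => rw [← Int.floor_add_fract x]
  rw [add_assoc, Int.floor_intCast_add]
  congr 1
  have hba : bphi + al = 1 := by unfold al; ring
  have hf0 := Int.fract_nonneg x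
  have hf1 := Int.fract_lt_one x
  rcases le_or_gt bphi (Int.fract x) with h | h
  · rw [if_pos h]
    apply Int.floor_eq_iff.mpr
    refine ⟨by push_cast; linarith, by push_cast; linarith [ha1]⟩
  · rw [if_neg (not_le.mpr h)]
    apply Int.floor_eq_iff.mpr
    refine ⟨by push_cast; linarith [ha0], by push_cast; linarith⟩

lemma fibWord_floor (u : ℕ) : (fibWord u : ℤ) = Flo (u+2) - Flo (u+1) := by
  have h1 : ((u+2:ℕ):ℝ) * al = ((u+1:ℕ):ℝ) * al + al := by push_cast; ring
  have h2 : Flo (u+2) = Flo (u+1) + (if bphi ≤ Int.fract (((u+1:ℕ):ℝ) * al) then 1 else 0) := by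
    unfold Flo
    rw [h1, floor_step]
  rw [h2]
  have h3 : (fibWord u : ℤ) = (if bphi ≤ Int.fract (((u+1:ℕ):ℝ) * al) then 1 else 0) := by
    rw [fibWord_ind]
    unfold ind
    have he : ((u:ℝ)+1) = ((u+1:ℕ):ℝ) := by push_cast; ring
    rw [he]
    split <;> norm_num
  rw [h3]
  ring

lemma fract_neg_small {y : ℝ} (h0 : -1 ≤ y) (h1 : y < 0) : Int.fract y = y + 1 := by
  have := fract_eq_self_of (y := y + 1) (by linarith) (by linarith)
  calc Int.fract y = Int.fract (y + (1:ℤ)) := (Int.fract_add_intCast y 1).symm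
  _ = y + 1 := by push_cast at this ⊢; exact this

lemma arc_conv {z b0 L : ℝ} (hb0 : 0 ≤ b0) (hL : 0 < L) (h1 : b0 + L ≤ 1)
    (h : Int.fract (z - b0) < L) : b0 ≤ Int.fract z ∧ Int.fract z < b0 + L := by
  set w := Int.fract z with hw
  have hw0 := Int.fract_nonneg z
  have hw1 := Int.fract_lt_one z
  have he : Int.fract (z - b0) = Int.fract (w - b0) := by
    have : z - b0 = (w - b0) + (⌊z⌋:ℤ) := by rw [hw, Int.fract]; push_cast; ring
    rw [this, Int.fract_add_intCast]
  rcases le_or_gt b0 w with hc | hc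
  · rw [he, fract_eq_self_of (by linarith) (by linarith)] at h
    exact ⟨hc, by linarith⟩
  · exfalso
    rw [he, fract_neg_small (by linarith) (by linarith)] at h
    linarith

lemma LB (j n p i : ℕ) (hj : 1 ≤ j) (hp1 : 1 ≤ p) (hn : lucas j ≤ n + 1)
    (hper : ∀ t, t + p < n → fibWord (i + t) = fibWord (i + t + p))
    (hplt : p < Nat.fib j) : False := by
  -- dispatch j ≤ 2
  rcases Nat.lt_or_ge j 3 with hj3 | hj3
  · interval_cases j
    · have : Nat.fib 1 = 1 := rfl
      omega
    · have : Nat.fib 2 = 1 := rfl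
      omega
  obtain ⟨k, rfl⟩ : ∃ k, j = k + 3 := ⟨j - 3, by omega⟩
  have hfib2 : Nat.fib (k+2) ≥ 1 := Nat.fib_pos.mpr (by omega)
  have hfib3 : Nat.fib (k+3) = Nat.fib (k+1) + Nat.fib (k+2) := Nat.fib_add_two (n := k+1)
  have hfib4 : Nat.fib (k+4) = Nat.fib (k+2) + Nat.fib (k+3) := Nat.fib_add_two (n := k+2)
  have hfibmono : Nat.fib (k+1) ≤ Nat.fib (k+2) := Nat.fib_mono (by omega)
  have hluc : lucas (k+3) = Nat.fib (k+2) + Nat.fib (k+4) := lucas_fib (k+2)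
  have hplt' : p < Nat.fib (k+3) := hplt
  have hn' : Nat.fib (k+2) + Nat.fib (k+4) ≤ n + 1 := by
    rw [← hluc]; exact hn
  obtain ⟨M, hM1, hM2⟩ : ∃ M : ℕ, bphi^M ≤ nrm ((p:ℝ) * al) ∧ Nat.fib (M+2) + p ≤ n + 1 := by
    by_cases hpf : p = Nat.fib (k+2)
    · refine ⟨k+2, ?_, ?_⟩
      · rw [hpf, nrm_fib (by omega)]
      · rw [hpf]
        have e : Nat.fib (k+2+2) = Nat.fib (k+4) := rfl
        omega
    · refine ⟨k+1, ?_, ?_⟩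
      · rcases lt_or_gt_of_ne hpf with h | h
        · have := BA (k+1) (by omega) p hp1 (by
            have e : Nat.fib (k+1+1) = Nat.fib (k+2) := rfl
            omega)
          exact this
        · -- p > fib (k+2)
          rcases Nat.eq_zero_or_pos k with rfl | hk1
          · exfalso
            have e2 : Nat.fib 2 = 1 := rfl
            have e3 : Nat.fib 3 = 2 := rfl
            have e2' : Nat.fib (0+2) = 1 := rfl
            have e3' : Nat.fib (0+3) = 2 := rfl
            omega
          obtain ⟨r, rfl⟩ : ∃ r, p = Nat.fib (k+2) + r := ⟨p - Nat.fib (k+2), by omega⟩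
          have hr1 : 1 ≤ r := by omega
          have hr2 : r < Nat.fib (k+1) := by omega
          have hBA : bphi^k ≤ nrm ((r:ℝ) * al) := BA k hk1 r hr1 (by
            have e : Nat.fib (k+1) = Nat.fib (k-1+1+1) := by congr 1; omega
            omega)
          have hsplit : ((Nat.fib (k+2) + r : ℕ):ℝ) * al = (r:ℝ) * al + (Nat.fib (k+2) : ℝ) * al := by
            push_cast; ring
          rw [hsplit]
          have hge := nrm_add_ge ((r:ℝ) * al) ((Nat.fib (k+2) : ℝ) * al)
          rw [nrm_fib (by omega)] at hge
          have hid : bphi^k - bphi^(k+2) = bphi^(k+1) := by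
            have h3 : bphi^(k+2) = bphi^k * bphi^2 := by ring
            have h4 : bphi^(k+1) = bphi^k * bphi := by ring
            rw [h3, h4, hbsq]; ring
          linarith
      · have e : Nat.fib (k+1+2) = Nat.fib (k+3) := rfl
        omega
  -- rotation argument
  set c := Int.fract ((p:ℝ) * al) with hcdef
  have hc1 : bphi^M ≤ c := le_trans hM1 (nrm_le_fract _)
  have hc2 : bphi^M ≤ 1 - c := le_trans hM1 (nrm_le_one_sub_fract _)
  have hc0 : 0 ≤ c := Int.fract_nonneg _
  have hcl1 : c < 1 := Int.fract_lt_one _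
  set g : ℕ → ℤ := fun s => (if 1 - c ≤ Int.fract ((s:ℝ) * al) then (1:ℤ) else 0) with hgdef
  have floor_split : ∀ s : ℕ, Flo (s + p) = ⌊(p:ℝ) * al⌋ + Flo s + g s := by
    intro s
    have h1 : ((s+p:ℕ):ℝ) * al = ((s:ℝ) * al + c) + (⌊(p:ℝ)*al⌋ : ℤ) := by
      rw [hcdef, Int.fract]
      push_cast
      ring
    unfold Flo
    rw [h1, Int.floor_add_intCast]
    have h2 : (s:ℝ) * al + c = ((Int.fract ((s:ℝ)*al)) + c) + (⌊(s:ℝ)*al⌋ : ℤ) := by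
      rw [Int.fract]; push_cast; ring
    rw [h2, Int.floor_add_intCast]
    have hf0 := Int.fract_nonneg ((s:ℝ)*al)
    have hf1 := Int.fract_lt_one ((s:ℝ)*al)
    have h3 : ⌊Int.fract ((s:ℝ)*al) + c⌋ = g s := by
      show _ = (if 1 - c ≤ Int.fract ((s:ℝ) * al) then (1:ℤ) else 0)
      rcases le_or_gt (1-c) (Int.fract ((s:ℝ)*al)) with h | h
      · rw [if_pos h]
        apply Int.floor_eq_iff.mpr
        refine ⟨by push_cast; linarith, by push_cast; linarith⟩
      · rw [if_neg (not_le.mpr h)]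
        apply Int.floor_eq_iff.mpr
        refine ⟨by push_cast; linarith, by push_cast; linarith⟩
    rw [h3]
    ring
  have gstep : ∀ t, t + p < n → g (i+t+2) = g (i+t+1) := by
    intro t htp
    have h1 : (fibWord (i+t) : ℤ) = (fibWord (i+t+p) : ℤ) := by
      exact_mod_cast congrArg (Nat.cast (R := ℤ)) (hper t htp)
    rw [fibWord_floor, fibWord_floor] at h1
    have h2 : Flo (i+t+p+2) = ⌊(p:ℝ)*al⌋ + Flo (i+t+2) + g (i+t+2) := by
      have := floor_split (i+t+2)
      rw [show i+t+2+p = i+t+p+2 from by omega] at this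
      exact this
    have h3 : Flo (i+t+p+1) = ⌊(p:ℝ)*al⌋ + Flo (i+t+1) + g (i+t+1) := by
      have := floor_split (i+t+1)
      rw [show i+t+1+p = i+t+p+1 from by omega] at this
      exact this
    omega
  have gconst : ∀ t, t + p ≤ n → g (i+1+t) = g (i+1) := by
    intro t
    induction t with
    | zero => intro _; rfl
    | succ t iht =>
        intro hle
        have h1 := gstep t (by omega)
        rw [show i+1+(t+1) = i+t+2 from by omega, h1, show i+t+1 = i+1+t from by omega]
        exact iht (by omega)
  -- two hits
  obtain ⟨t1, ht1, hh1⟩ := GH M ((1 - c) - ((i+1:ℕ):ℝ) * al)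
  obtain ⟨t2, ht2, hh2⟩ := GH M (0 - ((i+1:ℕ):ℝ) * al)
  have hconv1 : (t1:ℝ) * al - ((1 - c) - ((i+1:ℕ):ℝ) * al) = ((i+1+t1:ℕ):ℝ) * al - (1-c) := by
    push_cast; ring
  have hconv2 : (t2:ℝ) * al - (0 - ((i+1:ℕ):ℝ) * al) = ((i+1+t2:ℕ):ℝ) * al - 0 := by
    push_cast; ring
  rw [hconv1] at hh1
  rw [hconv2] at hh2
  have harc1 := arc_conv (z := ((i+1+t1:ℕ):ℝ) * al) (b0 := 1-c) (L := bphi^M)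
    (by linarith) (bpow_pos M) (by linarith) hh1
  have harc2 := arc_conv (z := ((i+1+t2:ℕ):ℝ) * al) (b0 := 0) (L := bphi^M)
    (le_refl 0) (bpow_pos M) (by linarith [bpow_le (k := 0) (m := M) (Nat.zero_le M), hb1, hb0]) hh2
  have hg1 : g (i+1+t1) = 1 := by
    show (if 1 - c ≤ Int.fract (((i+1+t1:ℕ):ℝ) * al) then (1:ℤ) else 0) = 1
    rw [if_pos harc1.1]
  have hg2 : g (i+1+t2) = 0 := by
    show (if 1 - c ≤ Int.fract (((i+1+t2:ℕ):ℝ) * al) then (1:ℤ) else 0) = 0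
    rw [if_neg (not_le.mpr (by linarith [harc2.2]))]
  have hc1' := gconst t1 (by omega)
  have hc2' := gconst t2 (by omega)
  omega

end

end FibAux

open FibAux in
/-- For n ≥ 1, the smallest integer occurring as the least period of some
length-n factor of the Fibonacci word equals F_j whenever j ≥ 1 and
L_j − 1 ≤ n ≤ L_{j+1} − 2. -/
theorem fibWord_smallest_least_period :
    ∀ j n : ℕ, 1 ≤ j → 1 ≤ n → lucas j ≤ n + 1 → n + 2 ≤ lucas (j + 1) →
      IsLeast {p : ℕ | ∃ x : List ℕ, IsFibFactor x ∧ x.length = n ∧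
          IsLeast {q : ℕ | HasPeriod x q} p}
        (Nat.fib j) := by
  intro j n hj hn1 h1 h2
  have hLB : ∀ p x, IsFibFactor x → x.length = n → HasPeriod x p → p < Nat.fib j → False := by
    intro p x hfac hlen hper hplt
    obtain ⟨i, hx⟩ := hfac
    refine LB j n p i hj hper.1 h1 ?_ hplt
    intro t htp
    have hx' : x = (List.range n).map (fun t => fibWord (i + t)) := by rw [hx, hlen]
    have hgd := hper.2 t (by omega)
    rw [hx', getD_map_range _ (show t < n by omega),
      getD_map_range _ (show t + p < n by omega)] at hgd
    rw [show i + t + p = i + (t + p) from by omega]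
    exact hgd
  constructor
  · -- membership
    rcases Nat.lt_or_ge j 3 with hj3 | hj3
    · interval_cases j
      · -- j = 1
        have hn : n = 1 := by
          have e1 : lucas (1+1) = 3 := rfl
          omega
        subst hn
        refine ⟨[fibWord 0], ⟨0, rfl⟩, rfl, ?_, ?_⟩
        · show HasPeriod [fibWord 0] (Nat.fib 1)
          exact ⟨le_refl 1, fun i hi => absurd hi (by simp)⟩
        · intro q hq
          exact hq.1
      · -- j = 2
        have hn : n = 2 := by
          have e1 : lucas 2 = 3 := rfl
          have e2 : lucas (2+1) = 4 := rfl
          omega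
        subst hn
        refine ⟨[fibWord 2, fibWord 3], ⟨2, rfl⟩, rfl, ?_, ?_⟩
        · show HasPeriod [fibWord 2, fibWord 3] (Nat.fib 2)
          refine ⟨le_refl 1, fun i hi => ?_⟩
          have hi0 : i = 0 := by simp at hi; omega
          subst hi0
          show fibWord 2 = fibWord 3
          decide
        · intro q hq
          exact hq.1
    · -- j ≥ 3
      obtain ⟨a, rfl⟩ : ∃ a, j = a + 3 := ⟨j - 3, by omega⟩
      obtain ⟨x, hfac, hlen, hper⟩ := exists_good a n (by
        have e : lucas (a+3+1) = lucas (a+4) := rfl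
        omega)
      refine ⟨x, hfac, hlen, hper, fun q hq => ?_⟩
      by_contra hcon
      push_neg at hcon
      exact hLB q x ⟨hfac.choose, hfac.choose_spec⟩ hlen hq hcon
  · -- lower bound
    intro q hq
    obtain ⟨x, hfac, hlen, hleast⟩ := hq
    by_contra hcon
    push_neg at hcon
    exact hLB q x hfac hlen hleast.1 hcon
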